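/- arXiv:2004.10559 — 2 statements merged into one kernel-verified Lean document; each statement's English description precedes it below -/
import Mathlib

section
/- Let f : (1/2, ∞) → ℝ satisfy f(σ) → +∞ and f(σ)/√V(σ) → 0 as σ → (1/2)^+, and let δ > 0. For σ > 1/2 define h(t) = ∑_{n=1}^∞ tanh(t/(n^σ·√V(σ)))·(1/(n^σ·√V(σ))). Then for any λ > 0 there exists δ₁ > 0 such that for all σ with 0 < σ − 1/2 ≤ δ₁, any t₀ > 0 solving δ·f(σ) = h(t₀) satisfies −t₀·δ·(1+λ)·f(σ) + ∑_{n=1}^∞ log cosh(t₀/(n^σ·√V(σ))) ≥ −(1/2)·δ²·(1+2λ)²·f(σ)². -/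
open Filter Topology

/-- `V σ = ∑_{n=1}^∞ n^{-2σ}`. -/
noncomputable def V (σ : ℝ) : ℝ := ∑' n : ℕ, (n : ℝ) ^ (-(2 * σ))

/-- `h σ t = ∑_{n=1}^∞ tanh(t/(n^σ √V(σ))) · (1/(n^σ √V(σ)))`
(the `n = 0` term vanishes). -/
noncomputable def hfun (σ t : ℝ) : ℝ :=
  ∑' n : ℕ, Real.tanh (t / ((n : ℝ) ^ σ * Real.sqrt (V σ))) *
    (1 / ((n : ℝ) ^ σ * Real.sqrt (V σ)))

lemma myHasDerivAt_tanh (x : ℝ) : HasDerivAt Real.tanh (1 / Real.cosh x ^ 2) x := by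
  have h := (Real.hasDerivAt_sinh x).div (Real.hasDerivAt_cosh x) (Real.cosh_pos x).ne'
  have heq : (Real.cosh x * Real.cosh x - Real.sinh x * Real.sinh x) / Real.cosh x ^ 2
      = 1 / Real.cosh x ^ 2 := by
    have := Real.cosh_sq_sub_sinh_sq x
    rw [show Real.cosh x * Real.cosh x - Real.sinh x * Real.sinh x
      = Real.cosh x ^ 2 - Real.sinh x ^ 2 by ring, this]
  rw [heq] at h
  have : Real.tanh = fun x => Real.sinh x / Real.cosh x := funext Real.tanh_eq_sinh_div_cosh
  rw [this]
  exact h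

lemma myHasDerivAt_logcosh (x : ℝ) :
    HasDerivAt (fun y => Real.log (Real.cosh y)) (Real.tanh x) x := by
  have h := (Real.hasDerivAt_cosh x).log (Real.cosh_pos x).ne'
  rwa [← Real.tanh_eq_sinh_div_cosh] at h

lemma nonneg_of_deriv {g g' : ℝ → ℝ} (hd : ∀ x, HasDerivAt g (g' x) x)
    (h0 : g 0 = 0) (hg' : ∀ x, 0 ≤ x → 0 ≤ g' x) {x : ℝ} (hx : 0 ≤ x) : 0 ≤ g x := by
  have hm : MonotoneOn g (Set.Ici (0:ℝ)) := by
    apply monotoneOn_of_deriv_nonneg (convex_Ici 0)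
      (fun y _ => (hd y).continuousAt.continuousWithinAt)
      (fun y _ => (hd y).differentiableAt.differentiableWithinAt)
    intro y hy
    rw [interior_Ici] at hy
    rw [(hd y).deriv]
    exact hg' y hy.le
  calc (0:ℝ) = g 0 := h0.symm
    _ ≤ g x := hm Set.self_mem_Ici hx hx

lemma tanh_nonneg {x : ℝ} (hx : 0 ≤ x) : 0 ≤ Real.tanh x := by
  rw [Real.tanh_eq_sinh_div_cosh]
  exact div_nonneg (Real.sinh_nonneg_iff.2 hx) (Real.cosh_pos x).le

lemma tanh_le_id {x : ℝ} (hx : 0 ≤ x) : Real.tanh x ≤ x := by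
  have h := nonneg_of_deriv (g := fun y => y - Real.tanh y)
    (g' := fun y => 1 - 1 / Real.cosh y ^ 2)
    (fun y => (hasDerivAt_id y).sub (myHasDerivAt_tanh y)) (by simp) ?_ hx
  · linarith
  · intro y _
    have h1 : 1 ≤ Real.cosh y ^ 2 := by nlinarith [Real.one_le_cosh y]
    have : 1 / Real.cosh y ^ 2 ≤ 1 := by
      rw [div_le_one (by positivity)]; exact h1
    linarith

lemma tanh_monotone : Monotone Real.tanh := by
  have : StrictMono Real.tanh :=
    strictMono_of_deriv_pos fun y => by rw [(myHasDerivAt_tanh y).deriv]; positivity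
  exact this.monotone

lemma tanh_sq_eq (y : ℝ) : 1 / Real.cosh y ^ 2 = 1 - Real.tanh y ^ 2 := by
  have hc : Real.cosh y ^ 2 ≠ 0 := by positivity
  rw [Real.tanh_eq_sinh_div_cosh, div_pow, eq_sub_iff_add_eq, ← add_div,
    div_eq_one_iff_eq hc]
  have := Real.cosh_sq_sub_sinh_sq y
  linarith

lemma id_sub_cube_le_tanh {x : ℝ} (hx : 0 ≤ x) : x - x ^ 3 / 3 ≤ Real.tanh x := by
  have hcube : ∀ y : ℝ, HasDerivAt (fun y : ℝ => y ^ 3 / 3) (y ^ 2) y := fun y => by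
    simpa using (hasDerivAt_pow 3 y).div_const 3
  have h := nonneg_of_deriv (g := fun y => Real.tanh y - (y - y ^ 3 / 3))
    (g' := fun y => 1 / Real.cosh y ^ 2 - (1 - y ^ 2))
    (fun y => (myHasDerivAt_tanh y).sub ((hasDerivAt_id y).sub (hcube y)))
    (by simp [Real.tanh_eq_sinh_div_cosh]) ?_ hx
  · linarith
  · intro y hy
    have h1 : Real.tanh y ≤ y := tanh_le_id hy
    have h2 : 0 ≤ Real.tanh y := tanh_nonneg hy
    rw [tanh_sq_eq y]
    nlinarith

lemma half_mul_tanh_le_logcosh {x : ℝ} (hx : 0 ≤ x) :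
    x / 2 * Real.tanh x ≤ Real.log (Real.cosh x) := by
  have h := nonneg_of_deriv (g := fun y => Real.log (Real.cosh y) - y / 2 * Real.tanh y)
    (g' := fun y => Real.tanh y - (1 / 2 * Real.tanh y + y / 2 * (1 / Real.cosh y ^ 2)))
    (fun y => (myHasDerivAt_logcosh y).sub
      (((hasDerivAt_id y).div_const 2).mul (myHasDerivAt_tanh y))) (by simp) ?_ hx
  · linarith
  · intro y hy
    have hc := Real.cosh_pos y
    have hc2 : (0:ℝ) < Real.cosh y ^ 2 := by positivity
    have hs : y ≤ Real.sinh y * Real.cosh y := by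
      have h2y : 2 * y ≤ Real.sinh (2 * y) := Real.self_le_sinh_iff.2 (by linarith)
      rw [Real.sinh_two_mul] at h2y
      linarith
    have hkey : y / Real.cosh y ^ 2 ≤ Real.tanh y := by
      rw [Real.tanh_eq_sinh_div_cosh, div_le_div_iff₀ hc2 hc]
      calc y * Real.cosh y ≤ (Real.sinh y * Real.cosh y) * Real.cosh y := by nlinarith
        _ = Real.sinh y * Real.cosh y ^ 2 := by ring
    have h2 : y / 2 * (1 / Real.cosh y ^ 2) = (y / Real.cosh y ^ 2) / 2 := by ring
    rw [h2]
    linarith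

lemma logcosh_le_half_sq (x : ℝ) : Real.log (Real.cosh x) ≤ x ^ 2 / 2 := by
  have main : ∀ y : ℝ, 0 ≤ y → Real.log (Real.cosh y) ≤ y ^ 2 / 2 := by
    intro z hz
    have h := nonneg_of_deriv (g := fun y => y ^ 2 / 2 - Real.log (Real.cosh y))
      (g' := fun y => (2:ℕ) * y ^ 1 / 2 - Real.tanh y)
      (fun y => ((hasDerivAt_pow 2 y).div_const 2).sub (myHasDerivAt_logcosh y)) (by simp) ?_ hz
    · linarith
    · intro y hy
      have := tanh_le_id hy
      simp only [pow_one, Nat.cast_ofNat]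
      linarith
  rcases le_total 0 x with hx | hx
  · exact main x hx
  · have h := main (-x) (by linarith)
    rw [Real.cosh_neg, neg_pow] at h
    simpa using h

lemma logcosh_nonneg (x : ℝ) : 0 ≤ Real.log (Real.cosh x) :=
  Real.log_nonneg (Real.one_le_cosh x)


noncomputable def aa (σ : ℝ) (n : ℕ) : ℝ := ((n : ℝ) ^ σ * Real.sqrt (V σ))⁻¹

variable {σ : ℝ}

lemma summable_base (hσ : 1/2 < σ) : Summable (fun n : ℕ => (n:ℝ) ^ (-(2*σ))) := by
  rw [Real.summable_nat_rpow]; linarith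

lemma V_pos (hσ : 1/2 < σ) : 0 < V σ :=
  Summable.tsum_pos (summable_base hσ) (fun n => by positivity) 1
    (by simpa using Real.rpow_pos_of_pos one_pos (-(2*σ)))

lemma aa_nonneg (n : ℕ) : 0 ≤ aa σ n := by unfold aa; positivity

lemma aa_le (hσ : 1/2 < σ) (n : ℕ) : aa σ n ≤ (Real.sqrt (V σ))⁻¹ := by
  have hW : 0 < Real.sqrt (V σ) := Real.sqrt_pos.2 (V_pos hσ)
  cases n with
  | zero =>
      unfold aa
      simp [Real.zero_rpow (by linarith : σ ≠ 0)]
  | succ m =>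
      unfold aa
      have h1 : (1:ℝ) ≤ ((m+1:ℕ):ℝ) ^ σ := by
        rw [show (1:ℝ) = (1:ℝ) ^ σ from (Real.one_rpow σ).symm]
        apply Real.rpow_le_rpow zero_le_one (by exact_mod_cast Nat.one_le_iff_ne_zero.2 (Nat.succ_ne_zero m)) (by linarith)
      rw [show (Real.sqrt (V σ))⁻¹ = (1 * Real.sqrt (V σ))⁻¹ by rw [one_mul]]
      apply inv_anti₀ (by positivity)
      apply mul_le_mul_of_nonneg_right h1 hW.le

lemma aa_sq (hσ : 1/2 < σ) (n : ℕ) : (aa σ n)^2 = (n:ℝ) ^ (-(2*σ)) / V σ := by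
  have hV := V_pos hσ
  cases n with
  | zero =>
      unfold aa
      simp [Real.zero_rpow (by linarith : σ ≠ 0),
        Real.zero_rpow (by intro h; nlinarith : -(2*σ) ≠ 0)]
  | succ m =>
      have hx : (0:ℝ) < ((m+1:ℕ):ℝ) := by positivity
      have h1 : (((m+1:ℕ):ℝ) ^ σ)^(2:ℕ) = ((m+1:ℕ):ℝ) ^ (2*σ) := by
        rw [← Real.rpow_natCast (((m+1:ℕ):ℝ) ^ σ) 2, ← Real.rpow_mul hx.le]
        norm_num [mul_comm]
      unfold aa
      rw [mul_inv, mul_pow, inv_pow, inv_pow, Real.sq_sqrt hV.le, h1,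
        Real.rpow_neg hx.le, div_eq_mul_inv]

lemma summable_aa_sq (hσ : 1/2 < σ) : Summable (fun n : ℕ => aa σ n ^ 2) := by
  have : (fun n : ℕ => aa σ n ^ 2) = fun n : ℕ => (n:ℝ) ^ (-(2*σ)) / V σ :=
    funext (aa_sq hσ)
  rw [this]
  exact (summable_base hσ).div_const _

lemma tsum_aa_sq (hσ : 1/2 < σ) : ∑' n : ℕ, aa σ n ^ 2 = 1 := by
  have : (fun n : ℕ => aa σ n ^ 2) = fun n : ℕ => (n:ℝ) ^ (-(2*σ)) / V σ :=
    funext (aa_sq hσ)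
  rw [this, tsum_div_const]
  exact div_self (V_pos hσ).ne'

lemma aa_sq_le (hσ : 1/2 < σ) (n : ℕ) : aa σ n ^ 2 ≤ (V σ)⁻¹ := by
  have h := aa_le hσ n
  have h2 : aa σ n ^ 2 ≤ ((Real.sqrt (V σ))⁻¹)^2 := pow_le_pow_left₀ (aa_nonneg n) h 2
  rwa [inv_pow, Real.sq_sqrt (V_pos hσ).le] at h2

lemma aa_four_le (hσ : 1/2 < σ) (n : ℕ) : aa σ n ^ 4 ≤ (V σ)⁻¹ * aa σ n ^ 2 := by
  have h := aa_sq_le hσ n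
  nlinarith [sq_nonneg (aa σ n), aa_nonneg (σ := σ) n]

lemma summable_aa_four (hσ : 1/2 < σ) : Summable (fun n : ℕ => aa σ n ^ 4) :=
  Summable.of_nonneg_of_le (fun n => by positivity) (aa_four_le hσ)
    ((summable_aa_sq hσ).mul_left _)

lemma tsum_aa_four_le (hσ : 1/2 < σ) : ∑' n : ℕ, aa σ n ^ 4 ≤ (V σ)⁻¹ := by
  calc ∑' n : ℕ, aa σ n ^ 4 ≤ ∑' n : ℕ, (V σ)⁻¹ * aa σ n ^ 2 :=
        Summable.tsum_le_tsum (aa_four_le hσ) (summable_aa_four hσ) ((summable_aa_sq hσ).mul_left _)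
    _ = (V σ)⁻¹ * ∑' n : ℕ, aa σ n ^ 2 := tsum_mul_left
    _ = (V σ)⁻¹ := by rw [tsum_aa_sq hσ, mul_one]

lemma summable_tanh (hσ : 1/2 < σ) {t : ℝ} (ht : 0 ≤ t) :
    Summable (fun n : ℕ => Real.tanh (t * aa σ n) * aa σ n) := by
  apply Summable.of_nonneg_of_le
    (fun n => mul_nonneg (tanh_nonneg (mul_nonneg ht (aa_nonneg n))) (aa_nonneg n))
    (fun n => ?_) ((summable_aa_sq hσ).mul_left t)
  have h1 := tanh_le_id (mul_nonneg ht (aa_nonneg (σ := σ) n))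
  have h2 := aa_nonneg (σ := σ) n
  calc Real.tanh (t * aa σ n) * aa σ n ≤ (t * aa σ n) * aa σ n :=
        mul_le_mul_of_nonneg_right h1 h2
    _ = t * aa σ n ^ 2 := by ring

lemma summable_logcosh (hσ : 1/2 < σ) (t : ℝ) :
    Summable (fun n : ℕ => Real.log (Real.cosh (t * aa σ n))) := by
  apply Summable.of_nonneg_of_le (fun n => logcosh_nonneg _) (fun n => ?_)
    ((summable_aa_sq hσ).mul_left (t^2/2))
  calc Real.log (Real.cosh (t * aa σ n)) ≤ (t * aa σ n)^2 / 2 := logcosh_le_half_sq _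
    _ = t^2/2 * aa σ n ^ 2 := by ring

lemma hfun_eq (σ t : ℝ) :
    hfun σ t = ∑' n : ℕ, Real.tanh (t * aa σ n) * aa σ n := by
  unfold hfun aa
  simp only [div_eq_mul_inv, one_mul]

lemma hfun_mono (hσ : 1/2 < σ) {s t : ℝ} (hs : 0 ≤ s) (hst : s ≤ t) :
    hfun σ s ≤ hfun σ t := by
  rw [hfun_eq, hfun_eq]
  refine Summable.tsum_le_tsum (fun n => ?_) (summable_tanh hσ hs) (summable_tanh hσ (hs.trans hst))
  exact mul_le_mul_of_nonneg_right
    (tanh_monotone (mul_le_mul_of_nonneg_right hst (aa_nonneg n))) (aa_nonneg n)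

lemma hfun_lower (hσ : 1/2 < σ) {s : ℝ} (hs : 0 ≤ s) :
    s - s^3 / (3 * V σ) ≤ hfun σ s := by
  have hV := V_pos hσ
  have key : ∀ n : ℕ, s * aa σ n ^ 2 - s^3/3 * aa σ n ^ 4 ≤ Real.tanh (s * aa σ n) * aa σ n := by
    intro n
    have h1 := id_sub_cube_le_tanh (mul_nonneg hs (aa_nonneg (σ := σ) n))
    have h2 := aa_nonneg (σ := σ) n
    calc s * aa σ n ^ 2 - s^3/3 * aa σ n ^ 4
        = (s * aa σ n - (s * aa σ n)^3 / 3) * aa σ n := by ring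
      _ ≤ Real.tanh (s * aa σ n) * aa σ n := mul_le_mul_of_nonneg_right h1 h2
  have hsum1 : Summable (fun n : ℕ => s * aa σ n ^ 2) := (summable_aa_sq hσ).mul_left s
  have hsum2 : Summable (fun n : ℕ => s^3/3 * aa σ n ^ 4) := (summable_aa_four hσ).mul_left _
  have hle := Summable.tsum_le_tsum key (hsum1.sub hsum2) (summable_tanh hσ hs)
  rw [Summable.tsum_sub hsum1 hsum2, tsum_mul_left, tsum_mul_left, tsum_aa_sq hσ, mul_one] at hle
  rw [hfun_eq]
  refine le_trans ?_ hle
  have h4 := tsum_aa_four_le hσ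
  have hs3 : 0 ≤ s^3/3 := by positivity
  have : s^3/3 * ∑' n : ℕ, aa σ n ^ 4 ≤ s^3/3 * (V σ)⁻¹ := mul_le_mul_of_nonneg_left h4 hs3
  have heq : s^3 / (3 * V σ) = s^3/3 * (V σ)⁻¹ := by field_simp
  linarith

/-- If `f(σ) → ∞` and `f(σ)/√V(σ) → 0` as `σ → (1/2)⁺` and `δ > 0`, then for any `λ > 0`
there is `δ₁ > 0` such that for `0 < σ - 1/2 ≤ δ₁`, any `t₀ > 0` solving `δ f(σ) = h(t₀)`
satisfies `-t₀ δ (1+λ) f(σ) + ∑_{n=1}^∞ log cosh(t₀/(n^σ √V(σ))) ≥ -(1/2) δ² (1+2λ)² f(σ)²`. -/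
theorem t0_log_cosh_lower_bound
    (f : ℝ → ℝ)
    (hf_top : Tendsto f (𝓝[>] (1/2 : ℝ)) atTop)
    (hf_small : Tendsto (fun σ => f σ / Real.sqrt (V σ)) (𝓝[>] (1/2 : ℝ)) (𝓝 0))
    (δ : ℝ) (hδ : 0 < δ) :
    ∀ lam > (0 : ℝ), ∃ δ₁ > (0 : ℝ),
      ∀ σ : ℝ, 1/2 < σ → σ - 1/2 ≤ δ₁ →
        ∀ t₀ : ℝ, 0 < t₀ → δ * f σ = hfun σ t₀ →
          -(t₀ * δ * (1 + lam) * f σ) +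
              ∑' n : ℕ, Real.log (Real.cosh (t₀ / ((n : ℝ) ^ σ * Real.sqrt (V σ)))) ≥
            -(1/2) * δ ^ 2 * (1 + 2 * lam) ^ 2 * (f σ) ^ 2 := by
  intro lam hlam
  have h2lam : (0:ℝ) < 1 + 2 * lam := by linarith
  set ε : ℝ := Real.sqrt (3 * lam / (1 + 2 * lam)) / ((1 + 2 * lam) * δ) with hε_def
  have hε : 0 < ε := div_pos (Real.sqrt_pos.2 (by positivity)) (by positivity)
  have hε2 : ((1 + 2 * lam) * δ)^2 * ε^2 = 3 * lam / (1 + 2 * lam) := by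
    have h1 : (1 + 2 * lam) * δ * ε = Real.sqrt (3 * lam / (1 + 2 * lam)) := by
      rw [hε_def]; field_simp
    calc ((1 + 2 * lam) * δ)^2 * ε^2 = ((1 + 2 * lam) * δ * ε)^2 := by ring
      _ = 3 * lam / (1 + 2 * lam) := by rw [h1, Real.sq_sqrt (by positivity)]
  have h1 : ∀ᶠ σ in 𝓝[>] (1/2:ℝ), 1 ≤ f σ := hf_top.eventually_ge_atTop 1
  have h2 : ∀ᶠ σ in 𝓝[>] (1/2:ℝ), |f σ / Real.sqrt (V σ)| < ε := by
    have := NormedAddCommGroup.tendsto_nhds_zero.mp hf_small ε hε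
    simpa only [Real.norm_eq_abs] using this
  have h3 := h1.and h2
  rw [Filter.eventually_iff, Metric.mem_nhdsWithin_iff] at h3
  obtain ⟨r, hr, hball⟩ := h3
  refine ⟨r/2, by positivity, ?_⟩
  intro σ hσ1 hσ2 t₀ ht₀ heq
  have hmem : σ ∈ Metric.ball (1/2:ℝ) r ∩ Set.Ioi (1/2:ℝ) := by
    constructor
    · rw [Metric.mem_ball, Real.dist_eq, abs_of_pos (by linarith)]
      linarith
    · exact hσ1
  obtain ⟨hf1, hfε⟩ := hball hmem
  have hV := V_pos hσ1
  have hW : 0 < Real.sqrt (V σ) := Real.sqrt_pos.2 hV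
  have hf0 : 0 < f σ := by linarith
  have hq : f σ / Real.sqrt (V σ) < ε := lt_of_le_of_lt (le_abs_self _) hfε
  have hfεV : f σ < ε * Real.sqrt (V σ) := (div_lt_iff₀ hW).1 hq
  have hf2V : f σ ^ 2 ≤ ε^2 * V σ := by
    nlinarith [Real.sq_sqrt hV.le, hW]
  -- Step A : t₀ ≤ (1+2 lam) * δ * f σ
  have hstepA : t₀ ≤ (1 + 2 * lam) * δ * f σ := by
    by_contra hcon
    push_neg at hcon
    set s : ℝ := (1 + 2 * lam) * δ * f σ with hs_def
    have hs0 : 0 < s := by positivity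
    have hmon := hfun_mono hσ1 hs0.le hcon.le
    have hlb := hfun_lower hσ1 hs0.le
    have hup : hfun σ t₀ = δ * f σ := heq.symm
    -- s^2 ≤ (3 lam / (1+2 lam)) * V σ
    have hs2 : s^2 ≤ 3 * lam / (1 + 2 * lam) * V σ := by
      calc s^2 = ((1 + 2 * lam) * δ)^2 * f σ ^ 2 := by rw [hs_def]; ring
        _ ≤ ((1 + 2 * lam) * δ)^2 * (ε^2 * V σ) :=
            mul_le_mul_of_nonneg_left hf2V (by positivity)
        _ = ((1 + 2 * lam) * δ)^2 * ε^2 * V σ := by ring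
        _ = 3 * lam / (1 + 2 * lam) * V σ := by rw [hε2]
    have hs3 : s^3 / (3 * V σ) ≤ lam * (δ * f σ) := by
      have e1 : s^3 / (3 * V σ) = s * s^2 / (3 * V σ) := by ring
      have e2 : s * s^2 / (3 * V σ) ≤ s * (3 * lam / (1 + 2 * lam) * V σ) / (3 * V σ) := by
        gcongr
      have e3 : s * (3 * lam / (1 + 2 * lam) * V σ) / (3 * V σ) = s * lam / (1 + 2 * lam) := by
        field_simp
      have e4 : s * lam / (1 + 2 * lam) = lam * (δ * f σ) := by
        rw [hs_def]; field_simp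
      rw [e1]
      rw [e3, e4] at e2
      exact e2
    have hfinal : δ * f σ ≥ (1 + 2 * lam) * δ * f σ - lam * (δ * f σ) := by
      have := le_trans hlb hmon
      rw [hup] at this
      calc δ * f σ ≥ s - s^3 / (3 * V σ) := this
        _ ≥ (1 + 2 * lam) * δ * f σ - lam * (δ * f σ) := by rw [← hs_def]; linarith
    nlinarith [mul_pos hδ hf0, mul_pos hlam (mul_pos hδ hf0)]
  -- Step B : lower bound on the log cosh sum
  have hstepB : t₀ / 2 * (δ * f σ) ≤ ∑' n : ℕ, Real.log (Real.cosh (t₀ * aa σ n)) := by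
    have key : ∀ n : ℕ, t₀ / 2 * (Real.tanh (t₀ * aa σ n) * aa σ n) ≤
        Real.log (Real.cosh (t₀ * aa σ n)) := by
      intro n
      have h := half_mul_tanh_le_logcosh (mul_nonneg ht₀.le (aa_nonneg (σ := σ) n))
      calc t₀ / 2 * (Real.tanh (t₀ * aa σ n) * aa σ n)
          = (t₀ * aa σ n) / 2 * Real.tanh (t₀ * aa σ n) := by ring
        _ ≤ Real.log (Real.cosh (t₀ * aa σ n)) := h
    have hle := Summable.tsum_le_tsum key ((summable_tanh hσ1 ht₀.le).mul_left (t₀/2))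
      (summable_logcosh hσ1 t₀)
    rw [tsum_mul_left, ← hfun_eq, ← heq] at hle
    exact hle
  have hgoal_sum : (∑' n : ℕ, Real.log (Real.cosh (t₀ / ((n : ℝ) ^ σ * Real.sqrt (V σ)))))
      = ∑' n : ℕ, Real.log (Real.cosh (t₀ * aa σ n)) := by
    unfold aa
    simp only [div_eq_mul_inv]
  rw [ge_iff_le, hgoal_sum]
  have hB := hstepB
  nlinarith [mul_le_mul_of_nonneg_right hstepA
    (by positivity : (0:ℝ) ≤ δ * f σ * (1/2 + lam))]
end

section
/- Let ε > 0 be sufficiently small, set δ = ε/2, and let σ_k = 1/2 + 1/(2·exp(k^{1−δ})) for k ≥ 1. Then almost surely limsup_{k→∞} F̄(σ_k)/√(2·log log V(σ_k)) ≤ √(1+ε). -/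
set_option maxHeartbeats 1000000

open MeasureTheory ProbabilityTheory Filter Topology

lemma ae_pm {Ω : Type*} [MeasurableSpace Ω] (μ : Measure Ω) [IsProbabilityMeasure μ]
    (Y : Ω → ℝ) (hY : Measurable Y) (hp : μ {ω | Y ω = 1} = 1/2) (hm : μ {ω | Y ω = -1} = 1/2) :
    ∀ᵐ ω ∂μ, Y ω = 1 ∨ Y ω = -1 := by
  set A : Set Ω := {ω | Y ω = 1} with hA
  set B : Set Ω := {ω | Y ω = -1} with hB
  have hAm : MeasurableSet A := hY (measurableSet_singleton 1)
  have hBm : MeasurableSet B := hY (measurableSet_singleton (-1))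
  have hdisj : Disjoint A B := by
    rw [Set.disjoint_left]
    intro ω h1 h2
    simp only [hA, hB, Set.mem_setOf_eq] at h1 h2
    rw [h1] at h2; norm_num at h2
  have hunion : μ (A ∪ B) = 1 := by
    rw [measure_union hdisj hBm, hp, hm]
    norm_num
    exact ENNReal.inv_two_add_inv_two
  have hae : ∀ᵐ ω ∂μ, ω ∈ A ∪ B := by
    rw [ae_iff]
    have h0 : {ω | ¬ ω ∈ A ∪ B} = (A ∪ B)ᶜ := rfl
    rw [h0, measure_compl (hAm.union hBm) (measure_ne_top μ _), hunion, measure_univ]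
    simp
  filter_upwards [hae] with ω hω
  exact hω


/-- two-point mgf computation -/
lemma integral_exp_pm {Ω : Type*} [MeasurableSpace Ω] (μ : Measure Ω) [IsProbabilityMeasure μ]
    (Y : Ω → ℝ) (hY : Measurable Y) (hp : μ {ω | Y ω = 1} = 1/2) (hm : μ {ω | Y ω = -1} = 1/2)
    (c : ℝ) : ∫ ω, Real.exp (c * Y ω) ∂μ = Real.cosh c := by
  set A : Set Ω := {ω | Y ω = 1} with hA
  set B : Set Ω := {ω | Y ω = -1} with hB
  have hAm : MeasurableSet A := hY (measurableSet_singleton 1)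
  have hBm : MeasurableSet B := hY (measurableSet_singleton (-1))
  have hdisj : Disjoint A B := by
    rw [Set.disjoint_left]
    intro ω h1 h2
    simp only [hA, hB, Set.mem_setOf_eq] at h1 h2
    rw [h1] at h2; norm_num at h2
  have hunion : μ (A ∪ B) = 1 := by
    rw [measure_union hdisj hBm, hp, hm]
    norm_num
    exact ENNReal.inv_two_add_inv_two
  have hae : ∀ᵐ ω ∂μ, ω ∈ A ∪ B := by
    rw [ae_iff]
    have : {ω | ¬ ω ∈ A ∪ B} = (A ∪ B)ᶜ := rfl
    rw [this, measure_compl (hAm.union hBm) (measure_ne_top μ _), hunion, measure_univ]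
    simp
  have hcongr : (fun ω => Real.exp (c * Y ω)) =ᵐ[μ]
      (fun ω => A.indicator (fun _ => Real.exp c) ω + B.indicator (fun _ => Real.exp (-c)) ω) := by
    filter_upwards [hae] with ω hω
    rcases hω with h | h
    · have h1 : Y ω = 1 := h
      have h2 : ω ∉ B := by simp [hB, Set.mem_setOf_eq, h1]; norm_num
      simp [Set.indicator_of_mem h, Set.indicator_of_notMem h2, h1]
    · have h1 : Y ω = -1 := h
      have h2 : ω ∉ A := by simp [hA, Set.mem_setOf_eq, h1]; norm_num
      simp [Set.indicator_of_mem h, Set.indicator_of_notMem h2, h1]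
  rw [integral_congr_ae hcongr, integral_add
      ((integrable_const _).indicator hAm) ((integrable_const _).indicator hBm),
    integral_indicator_const _ hAm, integral_indicator_const _ hBm, measureReal_def, measureReal_def, hp, hm, Real.cosh_eq]
  simp only [smul_eq_mul]
  rw [ENNReal.toReal_div]
  norm_num
  ring

lemma chernoff_tail {Ω : Type*} [MeasurableSpace Ω] (μ : Measure Ω) [IsProbabilityMeasure μ]
    (X : ℕ → Ω → ℝ) (hmeas : ∀ n, Measurable (X n))
    (hindep : iIndepFun X μ)
    (h1 : ∀ n, μ {ω | X n ω = 1} = 1/2) (h2 : ∀ n, μ {ω | X n ω = -1} = 1/2)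
    (a : ℕ → ℝ) (ha : Summable (fun n => (a n)^2))
    (G : Ω → ℝ)
    (hG : ∀ᵐ ω ∂μ, Tendsto (fun N => ∑ n ∈ Finset.range N, X n ω * a n) atTop (𝓝 (G ω)))
    (t : ℝ) (ht : 0 ≤ t) (hV : 0 < ∑' n, (a n)^2) :
    μ {ω | t ≤ G ω} ≤ ENNReal.ofReal (Real.exp (-t^2 / (2 * ∑' n, (a n)^2))) := by
  set Vv := ∑' n, (a n)^2 with hVv
  set l := t / Vv with hl
  have hl0 : 0 ≤ l := div_nonneg ht hV.le
  set Y : ℕ → Ω → ℝ := fun n ω => X n ω * a n with hYdef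
  have hYmeas : ∀ n, Measurable (Y n) := fun n => (hmeas n).mul_const _
  have hYindep : iIndepFun Y μ :=
    hindep.comp (fun n => fun x : ℝ => x * a n) (fun n => measurable_mul_const _)
  have hmgf_one : ∀ n, mgf (Y n) μ l = Real.cosh (l * a n) := by
    intro n
    have heq : (fun ω => Real.exp (l * Y n ω)) = fun ω => Real.exp ((l * a n) * X n ω) := by
      funext ω; simp only [hYdef]; ring_nf
    show ∫ ω, Real.exp (l * Y n ω) ∂μ = _
    rw [heq]
    exact integral_exp_pm μ (X n) (hmeas n) (h1 n) (h2 n) (l * a n)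
  have hSmeas : ∀ N : ℕ, Measurable (fun ω => ∑ n ∈ Finset.range N, Y n ω) :=
    fun N => Finset.measurable_sum _ (fun n _ => hYmeas n)
  have hmgfN : ∀ N : ℕ, mgf (fun ω => ∑ n ∈ Finset.range N, Y n ω) μ l
      ≤ Real.exp (l^2 * Vv / 2) := by
    intro N
    have hsum_eq : (fun ω => ∑ n ∈ Finset.range N, Y n ω) = ∑ n ∈ Finset.range N, Y n := by
      funext ω; rw [Finset.sum_apply]
    rw [hsum_eq, hYindep.mgf_sum hYmeas]
    calc ∏ n ∈ Finset.range N, mgf (Y n) μ l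
        = ∏ n ∈ Finset.range N, Real.cosh (l * a n) :=
          Finset.prod_congr rfl (fun n _ => hmgf_one n)
      _ ≤ ∏ n ∈ Finset.range N, Real.exp ((l * a n)^2 / 2) :=
          Finset.prod_le_prod (fun n _ => (Real.cosh_pos _).le)
            (fun n _ => Real.cosh_le_exp_half_sq _)
      _ = Real.exp (∑ n ∈ Finset.range N, (l * a n)^2 / 2) := (Real.exp_sum _ _).symm
      _ ≤ Real.exp (l^2 * Vv / 2) := by
          apply Real.exp_le_exp.mpr
          have heq2 : ∑ n ∈ Finset.range N, (l * a n)^2 / 2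
              = (l^2/2) * ∑ n ∈ Finset.range N, (a n)^2 := by
            rw [Finset.mul_sum]; apply Finset.sum_congr rfl; intro n _; ring
          rw [heq2]
          have hle : ∑ n ∈ Finset.range N, (a n)^2 ≤ Vv :=
            Summable.sum_le_tsum (Finset.range N) (fun i _ => sq_nonneg _) ha
          have h0 : (0:ℝ) ≤ l^2/2 := by positivity
          nlinarith
  have habs : ∀ᵐ ω ∂μ, ∀ n, |X n ω| ≤ 1 := by
    rw [ae_all_iff]
    intro n
    filter_upwards [ae_pm μ (X n) (hmeas n) (h1 n) (h2 n)] with ω hω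
    rcases hω with h | h <;> rw [h] <;> norm_num
  have hint : ∀ N : ℕ, Integrable (fun ω => Real.exp (l * ∑ n ∈ Finset.range N, Y n ω)) μ := by
    intro N
    apply Integrable.mono' (integrable_const (Real.exp (|l| * ∑ n ∈ Finset.range N, |a n|)))
    · exact (((hSmeas N).const_mul l).exp).aestronglyMeasurable
    · filter_upwards [habs] with ω hω
      rw [Real.norm_eq_abs, Real.abs_exp]
      apply Real.exp_le_exp.mpr
      calc l * ∑ n ∈ Finset.range N, Y n ω ≤ |l * ∑ n ∈ Finset.range N, Y n ω| := le_abs_self _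
        _ = |l| * |∑ n ∈ Finset.range N, Y n ω| := abs_mul _ _
        _ ≤ |l| * ∑ n ∈ Finset.range N, |Y n ω| := by
            apply mul_le_mul_of_nonneg_left (Finset.abs_sum_le_sum_abs _ _) (abs_nonneg l)
        _ ≤ |l| * ∑ n ∈ Finset.range N, |a n| := by
            apply mul_le_mul_of_nonneg_left _ (abs_nonneg l)
            apply Finset.sum_le_sum
            intro n _
            simp only [hYdef, abs_mul]
            calc |X n ω| * |a n| ≤ 1 * |a n| :=
                  mul_le_mul_of_nonneg_right (hω n) (abs_nonneg _)
              _ = |a n| := one_mul _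
  have hlintN : ∀ N : ℕ, ∫⁻ ω, ENNReal.ofReal (Real.exp (l * ∑ n ∈ Finset.range N, Y n ω)) ∂μ
      ≤ ENNReal.ofReal (Real.exp (l^2 * Vv/2)) := by
    intro N
    rw [← ofReal_integral_eq_lintegral_ofReal (hint N)
        (ae_of_all _ fun ω => (Real.exp_pos _).le)]
    exact ENNReal.ofReal_le_ofReal (hmgfN N)
  have hGae : AEMeasurable G μ := by
    have hG' : ∀ᵐ ω ∂μ, Tendsto (fun N => ∑ n ∈ Finset.range N, Y n ω) atTop (𝓝 (G ω)) := hG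
    exact aemeasurable_of_tendsto_metrizable_ae atTop (fun N => (hSmeas N).aemeasurable) hG'
  have hfatou : ∫⁻ ω, ENNReal.ofReal (Real.exp (l * G ω)) ∂μ
      ≤ ENNReal.ofReal (Real.exp (l^2 * Vv/2)) := by
    have heq : (fun ω => ENNReal.ofReal (Real.exp (l * G ω))) =ᵐ[μ]
        (fun ω => Filter.liminf
          (fun N : ℕ => ENNReal.ofReal (Real.exp (l * ∑ n ∈ Finset.range N, Y n ω))) atTop) := by
      filter_upwards [hG] with ω hω
      have htd : Tendsto (fun N : ℕ => ENNReal.ofReal (Real.exp (l * ∑ n ∈ Finset.range N, Y n ω)))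
          atTop (𝓝 (ENNReal.ofReal (Real.exp (l * G ω)))) := by
        apply (ENNReal.continuous_ofReal.tendsto _).comp
        apply (Real.continuous_exp.tendsto _).comp
        exact hω.const_mul l
      exact htd.liminf_eq.symm
    rw [lintegral_congr_ae heq]
    calc ∫⁻ ω, Filter.liminf
          (fun N : ℕ => ENNReal.ofReal (Real.exp (l * ∑ n ∈ Finset.range N, Y n ω))) atTop ∂μ
        ≤ Filter.liminf (fun N : ℕ =>
            ∫⁻ ω, ENNReal.ofReal (Real.exp (l * ∑ n ∈ Finset.range N, Y n ω)) ∂μ) atTop :=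
          lintegral_liminf_le (fun N =>
            ENNReal.measurable_ofReal.comp (((hSmeas N).const_mul l).exp))
      _ ≤ ENNReal.ofReal (Real.exp (l^2 * Vv/2)) := by
          apply (Filter.liminf_le_liminf (Filter.Eventually.of_forall hlintN)).trans_eq
          exact Filter.liminf_const _
  have hmark := mul_meas_ge_le_lintegral₀
    (μ := μ) (f := fun ω => ENNReal.ofReal (Real.exp (l * G ω)))
    (ENNReal.measurable_ofReal.comp_aemeasurable (Real.measurable_exp.comp_aemeasurable (hGae.const_mul l)))
    (ENNReal.ofReal (Real.exp (l * t)))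
  have hsub : {ω | t ≤ G ω} ⊆
      {ω | ENNReal.ofReal (Real.exp (l * t)) ≤ ENNReal.ofReal (Real.exp (l * G ω))} := by
    intro ω hω
    exact ENNReal.ofReal_le_ofReal (Real.exp_le_exp.mpr (mul_le_mul_of_nonneg_left hω hl0))
  have hkey : ENNReal.ofReal (Real.exp (l * t)) * μ {ω | t ≤ G ω}
      ≤ ENNReal.ofReal (Real.exp (l^2 * Vv/2)) := by
    calc ENNReal.ofReal (Real.exp (l * t)) * μ {ω | t ≤ G ω}
        ≤ ENNReal.ofReal (Real.exp (l * t)) *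
          μ {ω | ENNReal.ofReal (Real.exp (l * t)) ≤ ENNReal.ofReal (Real.exp (l * G ω))} :=
          mul_le_mul_right (measure_mono hsub) _
      _ ≤ ∫⁻ ω, ENNReal.ofReal (Real.exp (l * G ω)) ∂μ := hmark
      _ ≤ _ := hfatou
  have hdiv : μ {ω | t ≤ G ω}
      ≤ ENNReal.ofReal (Real.exp (l^2 * Vv/2)) / ENNReal.ofReal (Real.exp (l * t)) := by
    rw [ENNReal.le_div_iff_mul_le
      (Or.inl (by simp [ENNReal.ofReal_eq_zero, not_le, Real.exp_pos]))
      (Or.inl ENNReal.ofReal_ne_top)]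
    rw [mul_comm]
    exact hkey
  refine hdiv.trans ?_
  rw [← ENNReal.ofReal_div_of_pos (Real.exp_pos _), ← Real.exp_sub]
  apply ENNReal.ofReal_le_ofReal
  apply Real.exp_le_exp.mpr
  have : l^2 * Vv/2 - l * t = -t^2 / (2 * Vv) := by
    rw [hl]
    field_simp
    ring
  rw [this]

lemma V_summable {σ : ℝ} (h : 1/2 < σ) : Summable (fun n : ℕ => (n:ℝ) ^ (-(2*σ))) :=
  Real.summable_nat_rpow.mpr (by linarith)

lemma sq_rpow (σ : ℝ) (n : ℕ) : ((n:ℝ) ^ (-σ))^2 = (n:ℝ) ^ (-(2*σ)) := by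
  rw [← Real.rpow_natCast ((n:ℝ) ^ (-σ)) 2, ← Real.rpow_mul (Nat.cast_nonneg n)]
  norm_num
  ring_nf

lemma V_lower {σ : ℝ} (h1 : 1/2 < σ) (h2 : 2*σ - 1 ≤ 1) :
    Real.exp (-2) / (2*σ - 1) ≤ V σ := by
  set s := 2*σ - 1 with hs
  have hs0 : 0 < s := by simp only [hs]; linarith
  set y := 1/s with hy
  have hy1 : 1 ≤ y := by
    rw [hy, le_div_iff₀ hs0, one_mul]; exact h2
  have hy0 : 0 < y := lt_of_lt_of_le one_pos hy1
  set N := ⌈Real.exp y⌉₊ with hN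
  have hN1 : 1 ≤ N := Nat.one_le_ceil_iff.mpr (Real.exp_pos y)
  have hNpos : (0:ℝ) < N := by exact_mod_cast hN1
  have hNge : Real.exp y ≤ (N:ℝ) := Nat.le_ceil _
  have hexp1 : (2:ℝ) ≤ Real.exp 1 := by
    have := Real.add_one_le_exp 1; linarith
  have hNle : (N:ℝ) ≤ Real.exp (y+1) := by
    have h3 : (N:ℝ) < Real.exp y + 1 := Nat.ceil_lt_add_one (Real.exp_pos y).le
    have h4 : Real.exp y + 1 ≤ Real.exp (y+1) := by
      rw [Real.exp_add]
      have h5 : (1:ℝ) ≤ Real.exp y := by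
        rw [← Real.exp_zero]; exact Real.exp_le_exp.mpr hy0.le
      nlinarith
    linarith
  have hlogN : y ≤ Real.log N := (Real.le_log_iff_exp_le hNpos).mpr hNge
  have hlogN2 : Real.log N ≤ y + 1 := (Real.log_le_iff_le_exp hNpos).mpr hNle
  -- pointwise bound
  have hpt : ∀ n ∈ Finset.Icc 1 N, (n:ℝ)⁻¹ * (N:ℝ) ^ (-s) ≤ (n:ℝ) ^ (-(2*σ)) := by
    intro n hn
    rw [Finset.mem_Icc] at hn
    have hn0 : (0:ℝ) < n := by exact_mod_cast hn.1
    have hnN : (n:ℝ) ≤ N := by exact_mod_cast hn.2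
    have e1 : (n:ℝ) ^ (-(2*σ)) = (n:ℝ)⁻¹ * (n:ℝ) ^ (-s) := by
      rw [← Real.rpow_neg_one (n:ℝ), ← Real.rpow_add hn0]
      congr 1
      simp only [hs]; ring
    rw [e1]
    apply mul_le_mul_of_nonneg_left _ (inv_nonneg.mpr hn0.le)
    exact Real.rpow_le_rpow_of_nonpos hn0 hnN (neg_nonpos.mpr hs0.le)
  have hsum : ∑ n ∈ Finset.Icc 1 N, (n:ℝ) ^ (-(2*σ)) ≤ V σ :=
    Summable.sum_le_tsum (Finset.Icc 1 N) (fun i _ => Real.rpow_nonneg (Nat.cast_nonneg i) _)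
      (V_summable h1)
  have hharm : (N:ℝ) ^ (-s) * Real.log (N+1) ≤ ∑ n ∈ Finset.Icc 1 N, (n:ℝ) ^ (-(2*σ)) := by
    calc (N:ℝ) ^ (-s) * Real.log (N+1)
        ≤ (N:ℝ) ^ (-s) * (harmonic N : ℝ) := by
          apply mul_le_mul_of_nonneg_left _ (Real.rpow_nonneg hNpos.le _)
          exact_mod_cast log_add_one_le_harmonic N
      _ = ∑ n ∈ Finset.Icc 1 N, (n:ℝ)⁻¹ * (N:ℝ) ^ (-s) := by
          rw [harmonic_eq_sum_Icc]
          push_cast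
          rw [Finset.mul_sum]
          apply Finset.sum_congr rfl
          intro n _; ring
      _ ≤ ∑ n ∈ Finset.Icc 1 N, (n:ℝ) ^ (-(2*σ)) := Finset.sum_le_sum hpt
  have hrp : Real.exp (-2) ≤ (N:ℝ) ^ (-s) := by
    rw [Real.rpow_def_of_pos hNpos]
    apply Real.exp_le_exp.mpr
    have : Real.log N * (-s) = -(Real.log N * s) := by ring
    rw [this]
    have h6 : Real.log N * s ≤ (y+1) * s := mul_le_mul_of_nonneg_right hlogN2 hs0.le
    have h7 : (y+1) * s = 1 + s := by
      rw [hy]; field_simp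
    nlinarith
  have hlog : y ≤ Real.log (N+1) := by
    refine hlogN.trans (Real.log_le_log hNpos (by linarith))
  have hfinal : Real.exp (-2) * y ≤ (N:ℝ) ^ (-s) * Real.log (N+1) := by
    apply mul_le_mul hrp hlog hy0.le (Real.rpow_nonneg hNpos.le _)
  have : Real.exp (-2) / s = Real.exp (-2) * y := by rw [hy]; field_simp
  rw [this]
  linarith

lemma real_limsup_le_of_eventually {u : ℕ → ℝ} {a : ℝ} (ha : 0 ≤ a)
    (h : ∀ᶠ k in atTop, u k ≤ a) : Filter.limsup u atTop ≤ a := by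
  rw [Filter.limsup_eq]
  by_cases hb : BddBelow {c | ∀ᶠ k in atTop, u k ≤ c}
  · exact csInf_le hb h
  · rw [Real.sInf_of_not_bddBelow hb]; exact ha

/-- Step 2 (upper bound along a subsequence): for all sufficiently small `ε > 0`, with
`δ = ε/2` and `σ_k = 1/2 + 1/(2 exp(k^{1-δ}))`, almost surely
`limsup_k F̄(σ_k)/√(2 log log V(σ_k)) ≤ √(1+ε)`. -/
theorem upper_bound_along_subsequence
    {Ω : Type*} [MeasurableSpace Ω] (μ : Measure Ω) [IsProbabilityMeasure μ]
    (X : ℕ → Ω → ℝ) (hmeas : ∀ n, Measurable (X n))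
    (hindep : iIndepFun X μ)
    (h1 : ∀ n, μ {ω | X n ω = 1} = 1/2) (h2 : ∀ n, μ {ω | X n ω = -1} = 1/2)
    (F : ℝ → Ω → ℝ)
    (hF : ∀ σ : ℝ, 1/2 < σ → ∀ᵐ ω ∂μ,
      Tendsto (fun N : ℕ => ∑ n ∈ Finset.range N, X n ω * (n : ℝ) ^ (-σ))
        atTop (𝓝 (F σ ω))) :
    ∃ ε₀ > (0 : ℝ), ∀ ε : ℝ, 0 < ε → ε ≤ ε₀ →
      ∀ᵐ ω ∂μ,
        Filter.limsup
          (fun k : ℕ =>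
            let σk : ℝ := 1/2 + 1 / (2 * Real.exp ((k : ℝ) ^ (1 - ε/2)))
            (F σk ω / Real.sqrt (V σk)) / Real.sqrt (2 * Real.log (Real.log (V σk))))
          atTop ≤ Real.sqrt (1 + ε) := by
  refine ⟨1/2, by norm_num, ?_⟩
  intro ε hε hε2
  set w : ℕ → ℝ := fun k => (k:ℝ) ^ (1 - ε/2) with hw
  set σf : ℕ → ℝ := fun k => 1/2 + 1 / (2 * Real.exp (w k)) with hσf
  have hσhalf : ∀ k, 1/2 < σf k := by
    intro k
    have : 0 < 1 / (2 * Real.exp (w k)) := by positivity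
    simp only [hσf]; linarith
  have h2σ : ∀ k, 2 * σf k - 1 = Real.exp (-(w k)) := by
    intro k
    have hE : Real.exp (w k) ≠ 0 := (Real.exp_pos _).ne'
    simp only [hσf]
    rw [Real.exp_neg]
    field_simp
    ring
  have h2σle : ∀ k, 2 * σf k - 1 ≤ 1 := by
    intro k
    rw [h2σ k, ← Real.exp_zero]
    apply Real.exp_le_exp.mpr
    simp only [neg_nonpos, hw]
    exact Real.rpow_nonneg (Nat.cast_nonneg k) _
  set L : ℕ → ℝ := fun k => Real.log (Real.log (V (σf k))) with hL
  set t : ℕ → ℝ := fun k =>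
    Real.sqrt (1+ε) * Real.sqrt (2 * L k) * Real.sqrt (V (σf k)) with ht
  -- basic facts for k ≥ 256
  have hfacts : ∀ k : ℕ, 256 ≤ k →
      4 ≤ w k ∧ 1 < V (σf k) ∧ Real.log (w k - 2) ≤ L k ∧ 0 < L k := by
    intro k hk
    have hk0 : (256:ℝ) ≤ (k:ℝ) := by exact_mod_cast hk
    have hw4 : 4 ≤ w k := by
      have hlogk : 4 ≤ Real.log (k:ℝ) := by
        have h256 : (4:ℝ) ≤ Real.log 256 := by
          have : (256:ℝ) = 2^(8:ℕ) := by norm_num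
          rw [this, Real.log_pow]
          have := Real.log_two_gt_d9
          norm_num
          linarith
        exact h256.trans (Real.log_le_log (by norm_num) hk0)
      have hkpos : (0:ℝ) < k := by linarith
      have : w k = Real.exp (Real.log (k:ℝ) * (1 - ε/2)) := by
        simp only [hw]; rw [Real.rpow_def_of_pos hkpos]
      rw [this]
      have h34 : (3:ℝ)/4 ≤ 1 - ε/2 := by linarith
      have hle : (2:ℝ) ≤ Real.log (k:ℝ) * (1 - ε/2) := by nlinarith
      have he2 : (4:ℝ) ≤ Real.exp 2 := by
        have h := Real.add_one_le_exp 1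
        have : Real.exp 2 = Real.exp 1 * Real.exp 1 := by
          rw [← Real.exp_add]; norm_num
        nlinarith
      exact he2.trans (Real.exp_le_exp.mpr hle)
    have hVlow : Real.exp (w k - 2) ≤ V (σf k) := by
      have := V_lower (hσhalf k) (h2σle k)
      rw [h2σ k] at this
      rw [← Real.exp_sub] at this
      convert this using 2
      ring
    have hV1 : 1 < V (σf k) := by
      have : (1:ℝ) < Real.exp (w k - 2) := by
        rw [← Real.exp_zero]
        apply Real.exp_lt_exp.mpr
        linarith
      linarith
    have hlogV : w k - 2 ≤ Real.log (V (σf k)) := by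
      have := Real.log_le_log (Real.exp_pos _) hVlow
      rwa [Real.log_exp] at this
    have hLk : Real.log (w k - 2) ≤ L k := by
      apply Real.log_le_log (by linarith) hlogV
    have hLpos : 0 < L k := by
      have : (0:ℝ) < Real.log (w k - 2) := Real.log_pos (by linarith)
      linarith
    exact ⟨hw4, hV1, hLk, hLpos⟩
  -- Chernoff bound for k ≥ 256
  have hcher : ∀ k : ℕ, 256 ≤ k →
      μ {ω | t k ≤ F (σf k) ω} ≤ ENNReal.ofReal (4 * (k:ℝ) ^ (-(1+ε/4))) := by
    intro k hk
    obtain ⟨hw4, hV1, hLk, hLpos⟩ := hfacts k hk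
    have hVpos : 0 < V (σf k) := by linarith
    have htsum : (∑' n : ℕ, ((n:ℝ) ^ (-(σf k)))^2) = V (σf k) := by
      rw [V]; exact tsum_congr (fun n => sq_rpow (σf k) n)
    have hsumm : Summable (fun n : ℕ => ((n:ℝ) ^ (-(σf k)))^2) := by
      have := V_summable (hσhalf k)
      apply Summable.congr this
      intro n; exact (sq_rpow (σf k) n).symm
    have ht0 : 0 ≤ t k := by
      simp only [ht]; positivity
    have hbound := chernoff_tail μ X hmeas hindep h1 h2 (fun n => (n:ℝ) ^ (-(σf k)))
      hsumm (F (σf k)) (hF (σf k) (hσhalf k)) (t k) ht0 (by rw [htsum]; exact hVpos)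
    rw [htsum] at hbound
    refine hbound.trans (ENNReal.ofReal_le_ofReal ?_)
    -- exp (-(t k)^2/(2 V)) ≤ 4 k^{-(1+ε/4)}
    have htsq : (t k)^2 = (1+ε) * (2 * L k) * V (σf k) := by
      simp only [ht]
      rw [mul_pow, mul_pow, Real.sq_sqrt (by linarith), Real.sq_sqrt (by linarith),
        Real.sq_sqrt hVpos.le]
    have hexp_eq : -(t k)^2 / (2 * V (σf k)) = -((1+ε) * L k) := by
      rw [htsq]
      field_simp
    rw [hexp_eq]
    -- exp(-(1+ε) L k) = (log V)^{-(1+ε)} ≤ (w k - 2)^{-(1+ε)} ≤ (w k/2)^{-(1+ε)}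
    --   = 2^{1+ε} (w k)^{-(1+ε)} ≤ 4 k^{-(1+ε/4)}
    have hlogVpos : 0 < Real.log (V (σf k)) := by
      have : 0 < Real.log (w k - 2) := Real.log_pos (by linarith)
      have h7 : w k - 2 ≤ Real.log (V (σf k)) := by
        -- recover from hLk? we need it again; recompute
        have hVlow : Real.exp (w k - 2) ≤ V (σf k) := by
          have h8 := V_lower (hσhalf k) (h2σle k)
          rw [h2σ k, ← Real.exp_sub] at h8
          convert h8 using 2
          ring
        have h9 := Real.log_le_log (Real.exp_pos _) hVlow
        rwa [Real.log_exp] at h9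
      linarith
    have e1 : Real.exp (-((1+ε) * L k)) = Real.log (V (σf k)) ^ (-(1+ε)) := by
      rw [Real.rpow_def_of_pos hlogVpos]
      simp only [hL]
      congr 1
      ring
    rw [e1]
    have h7 : w k - 2 ≤ Real.log (V (σf k)) := by
      have hVlow : Real.exp (w k - 2) ≤ V (σf k) := by
        have h8 := V_lower (hσhalf k) (h2σle k)
        rw [h2σ k, ← Real.exp_sub] at h8
        convert h8 using 2
        ring
      have h9 := Real.log_le_log (Real.exp_pos _) hVlow
      rwa [Real.log_exp] at h9
    have e2 : Real.log (V (σf k)) ^ (-(1+ε)) ≤ (w k - 2) ^ (-(1+ε)) :=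
      Real.rpow_le_rpow_of_nonpos (by linarith) h7 (by linarith)
    have e3 : (w k - 2) ^ (-(1+ε)) ≤ (w k / 2) ^ (-(1+ε)) :=
      Real.rpow_le_rpow_of_nonpos (by linarith) (by linarith) (by linarith)
    have e4 : (w k / 2) ^ (-(1+ε)) = (w k) ^ (-(1+ε)) * (2:ℝ) ^ (1+ε) := by
      rw [Real.div_rpow (by linarith) (by norm_num), Real.rpow_neg (by norm_num : (0:ℝ) ≤ 2),
        division_def, inv_inv]
    have e5 : (2:ℝ) ^ (1+ε) ≤ 4 := by
      have : (4:ℝ) = (2:ℝ) ^ (2:ℝ) := by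
        rw [show (2:ℝ) = ((2:ℕ):ℝ) by norm_num, Real.rpow_natCast]
        norm_num
      rw [this]
      exact Real.rpow_le_rpow_of_exponent_le (by norm_num) (by linarith)
    have e6 : (w k) ^ (-(1+ε)) ≤ (k:ℝ) ^ (-(1+ε/4)) := by
      have hk1 : (1:ℝ) ≤ (k:ℝ) := by
        have : (256:ℝ) ≤ (k:ℝ) := by exact_mod_cast hk
        linarith
      have : (w k) ^ (-(1+ε)) = (k:ℝ) ^ ((1 - ε/2) * (-(1+ε))) := by
        simp only [hw]
        rw [← Real.rpow_mul (Nat.cast_nonneg k)]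
      rw [this]
      apply Real.rpow_le_rpow_of_exponent_le hk1
      nlinarith
    have hwpos : 0 < w k ^ (-(1+ε)) := Real.rpow_pos_of_pos (by linarith) _
    calc Real.log (V (σf k)) ^ (-(1+ε)) ≤ (w k / 2) ^ (-(1+ε)) := e2.trans e3
      _ = (w k) ^ (-(1+ε)) * (2:ℝ) ^ (1+ε) := e4
      _ ≤ (w k) ^ (-(1+ε)) * 4 := by nlinarith
      _ ≤ 4 * (k:ℝ) ^ (-(1+ε/4)) := by nlinarith
  -- Borel-Cantelli
  set B : ℕ → Set Ω := fun j => {ω | t (j+256) ≤ F (σf (j+256)) ω} with hB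
  have hsumB : (∑' j, μ (B j)) ≠ ⊤ := by
    have hg : Summable (fun j : ℕ => 4 * ((j+256:ℕ):ℝ) ^ (-(1+ε/4))) := by
      have h0 : Summable (fun n : ℕ => (n:ℝ) ^ (-(1+ε/4))) :=
        Real.summable_nat_rpow.mpr (by linarith)
      exact ((summable_nat_add_iff 256).mpr h0).mul_left 4
    have hle : ∀ j : ℕ, μ (B j) ≤ ENNReal.ofReal (4 * ((j+256:ℕ):ℝ) ^ (-(1+ε/4))) := by
      intro j
      exact hcher (j+256) (by omega)
    have hcalc : ∑' j, μ (B j) ≤ ENNReal.ofReal (∑' j, 4 * ((j+256:ℕ):ℝ) ^ (-(1+ε/4))) := by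
      calc ∑' j, μ (B j) ≤ ∑' j, ENNReal.ofReal (4 * ((j+256:ℕ):ℝ) ^ (-(1+ε/4))) :=
            ENNReal.tsum_le_tsum hle
        _ = ENNReal.ofReal (∑' j, 4 * ((j+256:ℕ):ℝ) ^ (-(1+ε/4))) :=
            (ENNReal.ofReal_tsum_of_nonneg (fun j => by positivity) hg).symm
    exact ne_top_of_le_ne_top ENNReal.ofReal_ne_top hcalc
  have hBC : μ (Filter.limsup B atTop) = 0 := measure_limsup_atTop_eq_zero hsumB
  have hae2 : ∀ᵐ ω ∂μ, ω ∉ Filter.limsup B atTop := measure_eq_zero_iff_ae_notMem.mp hBC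
  filter_upwards [hae2] with ω hω
  have hev : ∀ᶠ j in atTop, ω ∉ B j := by
    by_contra hcon
    rw [Filter.not_eventually] at hcon
    simp only [not_not] at hcon
    exact hω (Filter.mem_limsup_iff_frequently_mem.mpr hcon)
  obtain ⟨J, hJ⟩ := Filter.eventually_atTop.mp hev
  apply real_limsup_le_of_eventually (Real.sqrt_nonneg _)
  refine Filter.eventually_atTop.mpr ⟨J + 256, fun k hk => ?_⟩
  have hk256 : 256 ≤ k := by omega
  obtain ⟨hw4, hV1, hLk, hLpos⟩ := hfacts k hk256
  have hnot : ω ∉ B (k - 256) := hJ (k - 256) (by omega)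
  have hkeq : k - 256 + 256 = k := by omega
  rw [hB] at hnot
  simp only [Set.mem_setOf_eq, hkeq, not_le] at hnot
  -- hnot : F (σf k) ω < t k
  show (F (σf k) ω / Real.sqrt (V (σf k))) /
      Real.sqrt (2 * Real.log (Real.log (V (σf k)))) ≤ Real.sqrt (1 + ε)
  have hVpos : 0 < Real.sqrt (V (σf k)) := Real.sqrt_pos.mpr (by linarith)
  have hLspos : 0 < Real.sqrt (2 * Real.log (Real.log (V (σf k)))) := by
    apply Real.sqrt_pos.mpr
    simp only [hL] at hLpos
    linarith
  rw [div_le_iff₀ hLspos, div_le_iff₀ hVpos]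
  have htk : t k = Real.sqrt (1+ε) * Real.sqrt (2 * Real.log (Real.log (V (σf k)))) *
      Real.sqrt (V (σf k)) := by simp only [ht, hL]
  calc F (σf k) ω ≤ t k := hnot.le
    _ = _ := htk
end
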